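/- Let ξ > 0, a ≥ 0, let d ≥ 1 be an integer and M ≥ 2 an even integer. Then Σ_{l=1}^∞ (a l^d)^{M/2} e^{−l/(3ξ)} ≤ e^{1/(3ξ)} · 3ξ · [ a (3ξ d/2)^d M^d ]^{M/2}. (This is the tail-sum estimate (S.57) of the paper — obtained by comparing the sum with ∫₀^∞ (a x^d)^{M/2} e^{−x/(3ξ)} dx = a^{M/2} (3ξ)^{dM/2+1} (dM/2)! and using (dM/2)! ≤ (dM/2)^{dM/2} — stated with the harmless extra factor e^{1/(3ξ)} from the sum–integral comparison.) -/

import Mathlib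

open MeasureTheory Real Set

theorem aux_integral (c : ℝ) (hc : 0 < c) (N : ℕ) :
    ∫ t in Ioi (0:ℝ), t ^ N * Real.exp (-(c⁻¹ * t)) = c ^ (N+1) * (Nat.factorial N : ℝ) := by
  have h := Real.integral_rpow_mul_exp_neg_mul_Ioi (a := (N:ℝ)+1) (r := c⁻¹)
    (by positivity) (by positivity)
  rw [setIntegral_congr_fun measurableSet_Ioi (g := fun t : ℝ => t ^ (((N:ℝ)+1)-1) * Real.exp (-(c⁻¹ * t)))
    (fun t ht => by norm_num [Real.rpow_natCast]), h]
  rw [one_div, inv_inv, Real.Gamma_nat_eq_factorial]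
  rw [show ((N:ℝ)+1) = ((N+1 : ℕ):ℝ) by push_cast; ring, Real.rpow_natCast]

theorem aux_integrable (c : ℝ) (hc : 0 < c) (N : ℕ) :
    IntegrableOn (fun t : ℝ => t ^ N * Real.exp (-(c⁻¹ * t))) (Ioi 0) := by
  have h := integrableOn_rpow_mul_exp_neg_mul_rpow (s := (N:ℝ)) (p := 1) (b := c⁻¹)
    (neg_one_lt_zero.trans_le (Nat.cast_nonneg N)) zero_lt_one (by positivity)
  simpa [Real.rpow_natCast, neg_mul] using h

theorem aux_sum (c : ℝ) (hc : 0 < c) (N : ℕ) (n : ℕ) :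
    ∑ l ∈ Finset.range n, ((l:ℝ)+1)^N * Real.exp (-((l:ℝ)+1)/c)
      ≤ Real.exp (1/c) * (c^(N+1) * (Nat.factorial N : ℝ)) := by
  have hn0 : (0:ℝ) ≤ (n:ℝ) := Nat.cast_nonneg n
  set g : ℝ → ℝ := fun x => (x+1)^N * Real.exp (-x/c) with hg_def
  have hg : Continuous g := by fun_prop
  have step1 : ∀ l : ℕ, ((l:ℝ)+1)^N * Real.exp (-((l:ℝ)+1)/c)
      ≤ ∫ x in (l:ℝ)..((l:ℝ)+1), g x := by
    intro l
    have hconst : ((l:ℝ)+1)^N * Real.exp (-((l:ℝ)+1)/c)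
        = ∫ _ in (l:ℝ)..((l:ℝ)+1), ((l:ℝ)+1)^N * Real.exp (-((l:ℝ)+1)/c) := by
      simp
    rw [hconst]
    apply intervalIntegral.integral_mono_on (by linarith) intervalIntegrable_const
      (hg.intervalIntegrable _ _)
    intro x hx
    have h1 := hx.1; have h2 := hx.2
    have hl0 : (0:ℝ) ≤ (l:ℝ) := Nat.cast_nonneg l
    show ((l:ℝ)+1)^N * Real.exp (-((l:ℝ)+1)/c) ≤ (x+1)^N * Real.exp (-x/c)
    apply mul_le_mul
    · exact pow_le_pow_left₀ (by linarith) (by linarith) N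
    · apply Real.exp_le_exp.2
      apply div_le_div_of_nonneg_right (by linarith) hc.le
    · positivity
    · have hx1 : (0:ℝ) ≤ x + 1 := by linarith
      positivity
  have step2 : ∑ l ∈ Finset.range n, ∫ x in (l:ℝ)..((l:ℝ)+1), g x
      = ∫ x in (0:ℝ)..(n:ℝ), g x := by
    have := intervalIntegral.sum_integral_adjacent_intervals (a := fun k : ℕ => (k:ℝ))
      (f := g) (μ := volume) (n := n) (fun k _ => hg.intervalIntegrable _ _)
    simpa [Nat.cast_succ] using this
  have step3 : ∫ x in (0:ℝ)..(n:ℝ), g x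
      ≤ Real.exp (1/c) * (c^(N+1) * (Nat.factorial N : ℝ)) := by
    have hrw : ∀ x : ℝ, g x = Real.exp (1/c) * ((x+1)^N * Real.exp (-(c⁻¹ * (x+1)))) := by
      intro x
      have he : Real.exp (1/c) * Real.exp (-(c⁻¹ * (x+1))) = Real.exp (-x/c) := by
        rw [← Real.exp_add]
        congr 1
        field_simp
        ring
      rw [hg_def]
      dsimp only
      rw [← he]
      ring
    calc ∫ x in (0:ℝ)..(n:ℝ), g x
        = Real.exp (1/c) * ∫ x in (0:ℝ)..(n:ℝ), (x+1)^N * Real.exp (-(c⁻¹ * (x+1))) := by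
          rw [← intervalIntegral.integral_const_mul]
          exact intervalIntegral.integral_congr (fun x _ => hrw x)
      _ = Real.exp (1/c) * ∫ x in (1:ℝ)..((n:ℝ)+1), x^N * Real.exp (-(c⁻¹ * x)) := by
          rw [intervalIntegral.integral_comp_add_right (fun x => x^N * Real.exp (-(c⁻¹ * x))) 1]
          norm_num
      _ ≤ Real.exp (1/c) * (c^(N+1) * (Nat.factorial N : ℝ)) := by
          apply mul_le_mul_of_nonneg_left _ (Real.exp_nonneg _)
          rw [← aux_integral c hc N,
            intervalIntegral.integral_of_le (by linarith : (1:ℝ) ≤ (n:ℝ)+1)]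
          apply setIntegral_mono_set (aux_integrable c hc N)
          · exact (ae_restrict_iff' measurableSet_Ioi).2
              (Filter.Eventually.of_forall fun x hx => by
                have : (0:ℝ) < x := hx
                positivity)
          · exact HasSubset.Subset.eventuallyLE (fun x hx => lt_of_lt_of_le one_pos hx.1.le)
  calc ∑ l ∈ Finset.range n, ((l:ℝ)+1)^N * Real.exp (-((l:ℝ)+1)/c)
      ≤ ∑ l ∈ Finset.range n, ∫ x in (l:ℝ)..((l:ℝ)+1), g x :=
        Finset.sum_le_sum (fun l _ => step1 l)
    _ = ∫ x in (0:ℝ)..(n:ℝ), g x := step2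
    _ ≤ _ := step3

private theorem aux_main (c : ℝ) (hc : 0 < c) (a : ℝ) (ha : 0 ≤ a) (N m : ℕ) :
    (∑' l : ℕ, a ^ m * (((l:ℝ)+1)^N * Real.exp (-((l:ℝ)+1)/c)))
      ≤ a ^ m * (Real.exp (1/c) * (c^(N+1) * (Nat.factorial N : ℝ))) := by
  apply tsum_le_of_sum_le' (by positivity)
  intro s
  rw [← Finset.mul_sum]
  apply mul_le_mul_of_nonneg_left _ (pow_nonneg ha m)
  calc ∑ l ∈ s, ((l:ℝ)+1)^N * Real.exp (-((l:ℝ)+1)/c)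
      ≤ ∑ l ∈ Finset.range (s.sup id + 1), ((l:ℝ)+1)^N * Real.exp (-((l:ℝ)+1)/c) :=
        Finset.sum_le_sum_of_subset_of_nonneg
          (fun i hi => Finset.mem_range.2 (Nat.lt_succ_of_le (Finset.le_sup (f := id) hi)))
          (fun i _ _ => by positivity)
    _ ≤ _ := aux_sum c hc N _

/-- tail-sum estimate (S.57): for `ξ > 0`, `a ≥ 0`, `d ≥ 1` and an
even integer `M ≥ 2`,
`∑_{l=1}^∞ (a l^d)^{M/2} e^{-l/(3ξ)} ≤ e^{1/(3ξ)} · 3ξ · [a (3ξd/2)^d M^d]^{M/2}`. -/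
theorem tail_sum_estimate
    (ξ a : ℝ) (hξ : 0 < ξ) (ha : 0 ≤ a)
    (d M : ℕ) (hd : 1 ≤ d) (hM : 2 ≤ M) (hMe : Even M) :
    (∑' l : ℕ, (a * ((l : ℝ) + 1) ^ d) ^ (M / 2) *
        Real.exp (-((l : ℝ) + 1) / (3 * ξ)))
      ≤ Real.exp (1 / (3 * ξ)) * (3 * ξ) *
        (a * (3 * ξ * (d : ℝ) / 2) ^ d * (M : ℝ) ^ d) ^ (M / 2) := by
  obtain ⟨m, hm⟩ := hMe
  subst hm
  have hm1 : 1 ≤ m := by omega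
  have hdiv : (m + m) / 2 = m := by omega
  set c := 3 * ξ with hc_def
  have hc : 0 < c := by positivity
  set N := d * m with hN_def
  have hterm : ∀ l : ℕ, (a * ((l:ℝ)+1)^d)^((m+m)/2) * Real.exp (-((l:ℝ)+1)/c)
      = a^m * (((l:ℝ)+1)^N * Real.exp (-((l:ℝ)+1)/c)) := by
    intro l
    rw [hdiv, mul_pow, ← pow_mul, ← hN_def]
    ring
  have key : (a * (c*(d:ℝ)/2)^d * ((m+m:ℕ):ℝ)^d)^m = a^m * (c^N * (N:ℝ)^N) := by
    have h1 : (c*(d:ℝ)/2)^d * ((m+m:ℕ):ℝ)^d = (c*(N:ℝ))^d := by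
      rw [← mul_pow]
      congr 1
      rw [hN_def]
      push_cast
      ring
    calc (a * (c*(d:ℝ)/2)^d * ((m+m:ℕ):ℝ)^d)^m
        = (a * ((c*(N:ℝ))^d))^m := by rw [mul_assoc, h1]
      _ = a^m * ((c*(N:ℝ))^d)^m := by rw [mul_pow]
      _ = a^m * (c*(N:ℝ))^N := by rw [← pow_mul, ← hN_def]
      _ = a^m * (c^N * (N:ℝ)^N) := by rw [mul_pow]
  calc (∑' l : ℕ, (a * ((l:ℝ)+1)^d)^((m+m)/2) * Real.exp (-((l:ℝ)+1)/c))
      = ∑' l : ℕ, a^m * (((l:ℝ)+1)^N * Real.exp (-((l:ℝ)+1)/c)) := tsum_congr hterm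
    _ ≤ a^m * (Real.exp (1/c) * (c^(N+1) * (Nat.factorial N : ℝ))) :=
        aux_main c hc a ha N m
    _ ≤ a^m * (Real.exp (1/c) * (c^(N+1) * (N:ℝ)^N)) := by
        gcongr
        exact_mod_cast Nat.factorial_le_pow N
    _ = Real.exp (1/c) * c * (a * (c*(d:ℝ)/2)^d * ((m+m:ℕ):ℝ)^d)^m := by
        rw [key]; ring
    _ = _ := by rw [hdiv]
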